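/- arXiv:2301.06102 — 6 statements merged into one kernel-verified Lean document; each statement's English description precedes it below -/
import Mathlib

section
/- Let f : P_m → P_n be a holomorphic mapping between open unit polydiscs with f(0) = 0, and write the first-order Taylor coefficients a_{il} = ∂f_l/∂z^i (0). Then the linear map z ↦ (Σ_i a_{i1} z^i, ..., Σ_i a_{in} z^i) maps P_m into P_n; equivalently, Σ_{i=1}^m |∂f_l/∂z^i(0)| ≤ 1 for each l = 1,...,n. -/
def polydisc (m : ℕ) : Set (Fin m → ℂ) := {z | ∀ l, ‖z l‖ < 1}

/-- If `f : P_m → P_n` is holomorphic with `f 0 = 0`, then its linear part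
at `0` maps `P_m` into `P_n`; equivalently the ℓ¹ norm of each column of the Jacobian at
`0` is at most 1. -/
theorem linear_part_maps_polydisc (m n : ℕ) (f : (Fin m → ℂ) → (Fin n → ℂ))
    (hf : DifferentiableOn ℂ f (polydisc m))
    (hmaps : ∀ z ∈ polydisc m, f z ∈ polydisc n)
    (h0 : f 0 = 0) :
    (∀ z ∈ polydisc m,
      (fun l => ∑ i, fderiv ℂ f 0 (Pi.single i 1) l * z i) ∈ polydisc n) ∧
    ∀ l, ∑ i, ‖fderiv ℂ f 0 (Pi.single i 1) l‖ ≤ 1 := by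
  have hopen : IsOpen (polydisc m) := by
    have hpd : polydisc m = Set.pi Set.univ (fun _ : Fin m => Metric.ball (0:ℂ) 1) := by
      ext z
      simp [polydisc, Set.mem_pi, Metric.mem_ball, Complex.dist_eq]
    rw [hpd]
    exact isOpen_set_pi Set.finite_univ fun i _ => Metric.isOpen_ball
  have h0mem : (0 : Fin m → ℂ) ∈ polydisc m := fun l => by simp
  have hdiff0 : DifferentiableAt ℂ f 0 := hf.differentiableAt (hopen.mem_nhds h0mem)
  set D := fderiv ℂ f 0 with hD
  have hfd : HasFDerivAt f D 0 := hdiff0.hasFDerivAt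
  have key : ∀ l, ∑ i, ‖D (Pi.single i 1) l‖ ≤ 1 := by
    intro l
    set a : Fin m → ℂ := fun i => D (Pi.single i 1) l with ha
    set w : Fin m → ℂ := fun i => if a i = 0 then 1 else (‖a i‖ : ℂ) / a i with hw
    have hw1 : ∀ i, ‖w i‖ = 1 := by
      intro i
      by_cases h : a i = 0
      · simp [hw, h]
      · simp [hw, h, norm_div, Complex.norm_real, norm_norm,
          div_self (norm_ne_zero_iff.mpr h)]
    have haw : ∀ i, w i * a i = (‖a i‖ : ℂ) := by
      intro i
      by_cases h : a i = 0
      · simp [hw, h]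
      · show (if a i = 0 then 1 else (‖a i‖ : ℂ) / a i) * a i = _
        rw [if_neg h]; exact div_mul_cancel₀ _ h
    set g : ℂ → ℂ := fun ζ => f (ζ • w) l with hg
    have hmem : ∀ ζ ∈ Metric.ball (0:ℂ) 1, ζ • w ∈ polydisc m := by
      intro ζ hζ i
      simp only [Pi.smul_apply, smul_eq_mul, norm_mul, hw1, mul_one]
      simpa [Complex.dist_eq] using hζ
    have hgd : DifferentiableOn ℂ g (Metric.ball 0 1) := by
      intro ζ hζ
      have hA : DifferentiableAt ℂ (fun ζ : ℂ => ζ • w) ζ := differentiableAt_id.smul_const w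
      have hB : DifferentiableAt ℂ f (ζ • w) :=
        hf.differentiableAt (hopen.mem_nhds (hmem ζ hζ))
      exact ((differentiableAt_pi.mp (hB.comp ζ hA)) l).differentiableWithinAt
    have hmapsg : Set.MapsTo g (Metric.ball 0 1) (Metric.ball (g 0) 1) := by
      intro ζ hζ
      have h1 : ‖g ζ‖ < 1 := hmaps _ (hmem ζ hζ) l
      have hg0 : g 0 = 0 := by simp [hg, h0]
      rw [hg0]
      simpa [Metric.mem_ball, Complex.dist_eq] using h1
    have hschwarz : ‖deriv g 0‖ ≤ 1 := by
      have hg0 : g 0 = 0 := by simp [hg, h0]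
      have := Complex.norm_deriv_le_div_of_mapsTo_ball hgd (hmapsg.mono_right Metric.ball_subset_closedBall) one_pos
      simpa using this
    have hA' : HasDerivAt (fun ζ : ℂ => ζ • w) w 0 := by
      simpa using (hasDerivAt_id (0:ℂ)).smul_const w
    have hcomp : HasDerivAt (fun ζ : ℂ => f (ζ • w)) (D w) 0 := by
      have hfd' : HasFDerivAt f D ((0:ℂ) • w) := by rwa [zero_smul]
      exact hfd'.comp_hasDerivAt 0 hA'
    have hgl : HasDerivAt g (D w l) 0 := (hasDerivAt_pi.mp hcomp) l
    have hwsum : w = ∑ i, w i • (Pi.single i (1:ℂ) : Fin m → ℂ) := by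
      ext j
      simp [Pi.single_apply]
    have hDw : D w l = ∑ i, w i * a i := by
      conv_lhs => rw [hwsum]
      rw [map_sum]
      simp [ha, Finset.sum_apply]
    have hderiv : deriv g 0 = ((∑ i, ‖a i‖ : ℝ) : ℂ) := by
      rw [hgl.deriv, hDw]
      push_cast
      exact Finset.sum_congr rfl fun i _ => haw i
    rw [hderiv] at hschwarz
    rw [Complex.norm_real, Real.norm_eq_abs, abs_of_nonneg (Finset.sum_nonneg fun i _ => norm_nonneg _)]
      at hschwarz
    exact hschwarz
  refine ⟨?_, key⟩
  intro z hz l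
  simp only [polydisc, Set.mem_setOf_eq]
  by_cases hm : Nonempty (Fin m)
  · obtain ⟨i₀⟩ := hm
    have hne : (Finset.univ : Finset (Fin m)).Nonempty := ⟨i₀, Finset.mem_univ i₀⟩
    set M := Finset.univ.sup' hne (fun i => ‖z i‖) with hM
    have hM1 : M < 1 := (Finset.sup'_lt_iff hne).mpr fun i _ => hz i
    have hM0 : 0 ≤ M :=
      le_trans (norm_nonneg (z i₀)) (Finset.le_sup' (fun i => ‖z i‖) (Finset.mem_univ i₀))
    calc ‖∑ i, D (Pi.single i 1) l * z i‖
        ≤ ∑ i, ‖D (Pi.single i 1) l * z i‖ := norm_sum_le _ _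
      _ = ∑ i, ‖D (Pi.single i 1) l‖ * ‖z i‖ := by simp [norm_mul]
      _ ≤ ∑ i, ‖D (Pi.single i 1) l‖ * M :=
          Finset.sum_le_sum fun i _ =>
            mul_le_mul_of_nonneg_left (Finset.le_sup' (fun i => ‖z i‖) (Finset.mem_univ i))
              (norm_nonneg _)
      _ = (∑ i, ‖D (Pi.single i 1) l‖) * M := (Finset.sum_mul ..).symm
      _ ≤ 1 * M := mul_le_mul_of_nonneg_right (key l) hM0
      _ = M := one_mul M
      _ < 1 := hM1
  · have : IsEmpty (Fin m) := not_nonempty_iff.mp hm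
    simp
end

section
/- Let f : P_m → P_n be holomorphic with f(0) = 0, and define φ_{t,k}, φ̃_{t̃,k̃} as above on C^m and C^n respectively. Then for every z ∈ P_m, φ̃_{t̃,k̃}^2(f(z)) ≤ ((n + t̃ n^{1/k̃})/(1+t̃)) · φ_{t,k}^2(z). -/
noncomputable def phiSq (m : ℕ) (t : ℝ) (k : ℕ) (v : Fin m → ℂ) : ℝ :=
  (1/(1+t)) * (∑ l, ‖v l‖^2 + t * (∑ l, ‖v l‖^(2*k)) ^ ((1:ℝ)/k))

/-- Schwarz lemma for components on the polydisc. -/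
lemma schwarz_component (m n : ℕ) (f : (Fin m → ℂ) → (Fin n → ℂ))
    (hf : DifferentiableOn ℂ f (polydisc m))
    (hmaps : ∀ z ∈ polydisc m, f z ∈ polydisc n)
    (h0 : f 0 = 0) (z : Fin m → ℂ) (hz : z ∈ polydisc m)
    (M : ℝ) (hMpos : 0 < M) (hM1 : M < 1) (hM : ∀ l, ‖z l‖ ≤ M)
    (j : Fin n) : ‖f z j‖ ≤ M := by
  set inner : ℂ → (Fin m → ℂ) := fun lam => fun l => lam * ((M : ℂ)⁻¹ * z l) with hinner
  have habsM : ‖(M:ℂ)⁻¹‖ = M⁻¹ := by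
    rw [norm_inv, Complex.norm_real, Real.norm_of_nonneg hMpos.le]
  have hinnermaps : Set.MapsTo inner (Metric.ball (0:ℂ) 1) (polydisc m) := by
    intro lam hlam l
    have hlam1 : ‖lam‖ < 1 := by simpa using mem_ball_zero_iff.1 hlam
    have : ‖inner lam l‖ = ‖lam‖ * (M⁻¹ * ‖z l‖) := by
      simp [hinner, map_mul, habsM]
    rw [this]
    have h1 : M⁻¹ * ‖z l‖ ≤ 1 := by
      rw [inv_mul_le_iff₀ hMpos]; simpa using hM l
    calc ‖lam‖ * (M⁻¹ * ‖z l‖) ≤ ‖lam‖ * 1 :=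
          mul_le_mul_of_nonneg_left h1 (norm_nonneg _)
      _ < 1 := by simpa using hlam1
  have hinnerdiff : Differentiable ℂ inner := by
    rw [differentiable_pi]
    intro l
    exact differentiable_id.mul_const _
  set g : ℂ → ℂ := fun lam => f (inner lam) j with hg
  have hgd : DifferentiableOn ℂ g (Metric.ball (0:ℂ) 1) := by
    have : DifferentiableOn ℂ (fun lam => f (inner lam)) (Metric.ball (0:ℂ) 1) :=
      hf.comp hinnerdiff.differentiableOn hinnermaps
    exact (differentiableOn_pi.1 this) j
  have hgmaps : Set.MapsTo g (Metric.ball (0:ℂ) 1) (Metric.ball (0:ℂ) 1) := by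
    intro lam hlam
    have := hmaps (inner lam) (hinnermaps hlam) j
    simpa [mem_ball_zero_iff] using this
  have hg0 : g 0 = 0 := by
    have : inner 0 = (0 : Fin m → ℂ) := by funext l; simp [hinner]
    simp [hg, this, h0]
  have habsMC : ‖(M:ℂ)‖ = M := by rw [Complex.norm_real, Real.norm_of_nonneg hMpos.le]
  have key := Complex.norm_le_norm_of_mapsTo_ball hgd (hgmaps.mono_right Metric.ball_subset_closedBall) hg0
    (z := (M:ℂ)) (by rw [habsMC]; exact hM1)
  have hMne : (M:ℂ) ≠ 0 := by
    simp [Complex.ofReal_ne_zero]; exact ne_of_gt hMpos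
  have : inner (M:ℂ) = z := by
    funext l
    simp [hinner, ← mul_assoc, mul_inv_cancel₀ hMne]
  calc ‖f z j‖ = ‖g (M:ℂ)‖ := by
        show _ = ‖f (inner (M:ℂ)) j‖; rw [this]
    _ ≤ ‖(M:ℂ)‖ := key
    _ = M := habsMC

set_option maxHeartbeats 1000000 in
/-- Schwarz lemma at the origin: if `f : P_m → P_n` is holomorphic with
`f 0 = 0`, then `φ̃²_{t̃,k̃}(f(z)) ≤ ((n + t̃ n^{1/k̃})/(1+t̃)) · φ²_{t,k}(z)`. -/
theorem schwarz_phi (m n : ℕ) (t tt : ℝ) (ht : 0 ≤ t) (htt : 0 ≤ tt)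
    (k kt : ℕ) (hk : 2 ≤ k) (hkt : 2 ≤ kt)
    (f : (Fin m → ℂ) → (Fin n → ℂ))
    (hf : DifferentiableOn ℂ f (polydisc m))
    (hmaps : ∀ z ∈ polydisc m, f z ∈ polydisc n)
    (h0 : f 0 = 0) :
    ∀ z ∈ polydisc m,
      phiSq n tt kt (f z) ≤ ((n + tt * (n:ℝ) ^ ((1:ℝ)/kt))/(1+tt)) * phiSq m t k z := by
  intro z hz
  have h1tt : (0:ℝ) < 1 + tt := by linarith
  have h1t : (0:ℝ) < 1 + t := by linarith
  have hktpos : (0:ℝ) < kt := by positivity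
  have hkpos : (0:ℝ) < k := by positivity
  have hCnn : (0:ℝ) ≤ (n + tt * (n:ℝ) ^ ((1:ℝ)/kt))/(1+tt) := by positivity
  by_cases hz0 : z = 0
  · subst hz0
    have hLHS : phiSq n tt kt (f 0) = 0 := by
      rw [h0]
      simp [phiSq, zero_pow (show 2*kt ≠ 0 by positivity),
        Real.zero_rpow (show ((kt:ℝ))⁻¹ ≠ 0 by positivity), one_div]
    have hRHS : (0:ℝ) ≤ phiSq m t k 0 := by
      simp [phiSq, zero_pow (show 2*k ≠ 0 by positivity),
        Real.zero_rpow (show ((k:ℝ))⁻¹ ≠ 0 by positivity), one_div]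
    rw [hLHS]
    exact mul_nonneg hCnn hRHS
  · obtain ⟨l', hl'⟩ : ∃ l, z l ≠ 0 := by
      by_contra h
      push_neg at h
      exact hz0 (funext h)
    obtain ⟨l₀, -, hl₀⟩ := Finset.exists_max_image Finset.univ
      (fun l => ‖z l‖) ⟨l', Finset.mem_univ l'⟩
    set M := ‖z l₀‖ with hMdef
    have hM : ∀ l, ‖z l‖ ≤ M := fun l => hl₀ l (Finset.mem_univ l)
    have hMpos : 0 < M := lt_of_lt_of_le (norm_pos_iff.mpr hl') (hM l')
    have hM1 : M < 1 := hz l₀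
    have hcomp : ∀ j, ‖f z j‖ ≤ M :=
      schwarz_component m n f hf hmaps h0 z hz M hMpos hM1 hM
    -- LHS bound
    have hsum2 : ∑ j, ‖f z j‖^2 ≤ n * M^2 := by
      calc ∑ j, ‖f z j‖^2 ≤ ∑ _j : Fin n, M^2 :=
            Finset.sum_le_sum (fun j _ => pow_le_pow_left₀ (norm_nonneg _) (hcomp j) 2)
        _ = n * M^2 := by simp [mul_comm]
    have hsumk : ∑ j, ‖f z j‖^(2*kt) ≤ n * M^(2*kt) := by
      calc ∑ j, ‖f z j‖^(2*kt) ≤ ∑ _j : Fin n, M^(2*kt) :=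
            Finset.sum_le_sum (fun j _ => pow_le_pow_left₀ (norm_nonneg _) (hcomp j) _)
        _ = n * M^(2*kt) := by simp [mul_comm]
    have hktne : ((kt:ℝ)) ≠ 0 := ne_of_gt hktpos
    have hrpow_eq : ((n:ℝ) * M^(2*kt)) ^ ((1:ℝ)/kt) = (n:ℝ)^((1:ℝ)/kt) * M^2 := by
      rw [Real.mul_rpow (by positivity) (by positivity)]
      congr 1
      rw [pow_mul, ← Real.rpow_natCast (M^2) kt, ← Real.rpow_mul (by positivity)]
      rw [show (kt:ℝ) * ((1:ℝ)/kt) = 1 by field_simp]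
      simp
    have hrpow_le : (∑ j, ‖f z j‖^(2*kt)) ^ ((1:ℝ)/kt)
        ≤ (n:ℝ)^((1:ℝ)/kt) * M^2 := by
      rw [← hrpow_eq]
      exact Real.rpow_le_rpow (by positivity) hsumk (by positivity)
    have hLHS : phiSq n tt kt (f z) ≤ ((n + tt * (n:ℝ)^((1:ℝ)/kt))/(1+tt)) * M^2 := by
      unfold phiSq
      have : ∑ j, ‖f z j‖^2 + tt * (∑ j, ‖f z j‖^(2*kt)) ^ ((1:ℝ)/kt)
          ≤ n * M^2 + tt * ((n:ℝ)^((1:ℝ)/kt) * M^2) :=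
        add_le_add hsum2 (mul_le_mul_of_nonneg_left hrpow_le htt)
      calc (1/(1+tt)) * (∑ j, ‖f z j‖^2
              + tt * (∑ j, ‖f z j‖^(2*kt)) ^ ((1:ℝ)/kt))
          ≤ (1/(1+tt)) * (n * M^2 + tt * ((n:ℝ)^((1:ℝ)/kt) * M^2)) :=
            mul_le_mul_of_nonneg_left this (by positivity)
        _ = ((n + tt * (n:ℝ)^((1:ℝ)/kt))/(1+tt)) * M^2 := by ring
    -- RHS bound
    have hsum2' : M^2 ≤ ∑ l, ‖z l‖^2 := by
      exact Finset.single_le_sum (f := fun l => ‖z l‖^2)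
        (fun l _ => by positivity) (Finset.mem_univ l₀)
    have hsumk' : M^(2*k) ≤ ∑ l, ‖z l‖^(2*k) :=
      Finset.single_le_sum (f := fun l => ‖z l‖^(2*k))
        (fun l _ => by positivity) (Finset.mem_univ l₀)
    have hkne : ((k:ℝ)) ≠ 0 := ne_of_gt hkpos
    have hMk : (M^(2*k) : ℝ) ^ ((1:ℝ)/k) = M^2 := by
      rw [pow_mul, ← Real.rpow_natCast (M^2) k, ← Real.rpow_mul (by positivity)]
      rw [show (k:ℝ) * ((1:ℝ)/k) = 1 by field_simp]
      simp
    have hrpow_ge : M^2 ≤ (∑ l, ‖z l‖^(2*k)) ^ ((1:ℝ)/k) := by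
      rw [← hMk]
      exact Real.rpow_le_rpow (by positivity) hsumk' (by positivity)
    have hRHS : M^2 ≤ phiSq m t k z := by
      unfold phiSq
      have : M^2 + t * M^2 ≤ ∑ l, ‖z l‖^2
          + t * (∑ l, ‖z l‖^(2*k)) ^ ((1:ℝ)/k) :=
        add_le_add hsum2' (mul_le_mul_of_nonneg_left hrpow_ge ht)
      calc M^2 = (1/(1+t)) * (M^2 + t * M^2) := by field_simp
        _ ≤ (1/(1+t)) * (∑ l, ‖z l‖^2
              + t * (∑ l, ‖z l‖^(2*k)) ^ ((1:ℝ)/k)) :=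
            mul_le_mul_of_nonneg_left this (by positivity)
    calc phiSq n tt kt (f z) ≤ ((n + tt * (n:ℝ)^((1:ℝ)/kt))/(1+tt)) * M^2 := hLHS
      _ ≤ ((n + tt * (n:ℝ)^((1:ℝ)/kt))/(1+tt)) * phiSq m t k z :=
          mul_le_mul_of_nonneg_left hRHS hCnn
end

section
/- The constant (n + t̃ n^{1/k̃})/(1+t̃) is optimal in the Schwarz inequality φ̃_{t̃,k̃}^2(f(z)) ≤ C·φ_{t,k}^2(z): for the holomorphic map f_0(z) = (z^1, z^1, ..., z^1) from P_m to P_n and any point z_0 = (z_0^1, 0, ..., 0) ∈ P_m, equality φ̃_{t̃,k̃}^2(f_0(z_0)) = ((n + t̃ n^{1/k̃})/(1+t̃)) · φ_{t,k}^2(z_0) holds. -/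
/-- The constant is optimal: for `f₀(z) = (z¹,...,z¹)` and
`z₀ = (z₀¹,0,...,0)` one has equality in the Schwarz inequality. -/
theorem schwarz_phi_optimal (m n : ℕ) [NeZero m] [NeZero n] (t tt : ℝ)
    (ht : 0 ≤ t) (htt : 0 ≤ tt) (k kt : ℕ) (hk : 2 ≤ k) (hkt : 2 ≤ kt)
    (c : ℂ) (hc : ‖c‖ < 1) :
    phiSq n tt kt ((fun z : Fin m → ℂ => fun _ : Fin n => z 0) (Pi.single 0 c))
      = ((n + tt * (n:ℝ) ^ ((1:ℝ)/kt))/(1+tt)) * phiSq m t k (Pi.single 0 c) := by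
  set a : ℝ := ‖c‖ with ha
  have ha0 : 0 ≤ a := norm_nonneg c
  have hk0 : (k:ℝ) ≠ 0 := by positivity
  have hkt0 : (kt:ℝ) ≠ 0 := by positivity
  have ht1 : (1:ℝ) + t ≠ 0 := by positivity
  have hsingle : ∀ p : ℕ, 0 < p →
      (∑ l : Fin m, ‖(Pi.single 0 c : Fin m → ℂ) l‖ ^ p) = a ^ p := by
    intro p hp
    rw [Fintype.sum_eq_single (0 : Fin m)]
    · rw [Pi.single_eq_same]
    · intro l hl
      rw [Pi.single_eq_of_ne hl, norm_zero, zero_pow hp.ne']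
  have hpow : ∀ p : ℕ, (p:ℝ) ≠ 0 → (a ^ (2 * p)) ^ ((1:ℝ)/p) = a ^ 2 := by
    intro p hp
    rw [pow_mul, ← Real.rpow_natCast (a ^ 2) p,
      ← Real.rpow_mul (by positivity), mul_one_div, div_self hp, Real.rpow_one]
  have hsimple : phiSq m t k (Pi.single 0 c) = a ^ 2 := by
    unfold phiSq
    rw [hsingle 2 (by norm_num), hsingle (2 * k) (by positivity), hpow k hk0]
    field_simp
  have hLHS : phiSq n tt kt (fun _ : Fin n => (Pi.single 0 c : Fin m → ℂ) 0)
      = (1/(1+tt)) * ((n : ℝ) * a ^ 2 + tt * ((n:ℝ) ^ ((1:ℝ)/kt) * a ^ 2)) := by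
    unfold phiSq
    rw [Pi.single_eq_same]
    simp only [Finset.sum_const, Finset.card_univ, Fintype.card_fin, nsmul_eq_mul]
    rw [Real.mul_rpow (by positivity) (by positivity), hpow kt hkt0]
  rw [hLHS, hsimple]
  ring
end

section
/- Let f : P_m → P_n be holomorphic with f(λz) = λ^N f(z) for all λ in the unit disc and all z ∈ P_m, where N ≥ 1 is an integer. Then φ̃_{t̃,k̃}^2(f(z)) ≤ ((n + t̃ n^{1/k̃})/(1+t̃)) · φ_{t,k}^{2N}(z) for all z ∈ P_m. -/
/-- If `f : P_m → P_n` is holomorphic and homogeneous of degree `N`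
(`f(λz) = λ^N f(z)` for `λ` in the unit disc), then
`φ̃²_{t̃,k̃}(f(z)) ≤ ((n + t̃ n^{1/k̃})/(1+t̃)) · (φ²_{t,k}(z))^N`. -/
theorem schwarz_phi_homogeneous (m n : ℕ) (t tt : ℝ) (ht : 0 ≤ t) (htt : 0 ≤ tt)
    (k kt N : ℕ) (hk : 2 ≤ k) (hkt : 2 ≤ kt) (hN : 1 ≤ N)
    (f : (Fin m → ℂ) → (Fin n → ℂ))
    (hf : DifferentiableOn ℂ f (polydisc m))
    (hmaps : ∀ z ∈ polydisc m, f z ∈ polydisc n)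
    (hhom : ∀ lam : ℂ, ‖lam‖ < 1 → ∀ z ∈ polydisc m,
      f (lam • z) = lam ^ N • f z) :
    ∀ z ∈ polydisc m,
      phiSq n tt kt (f z)
        ≤ ((n + tt * (n:ℝ) ^ ((1:ℝ)/kt))/(1+tt)) * (phiSq m t k z) ^ N := by
  intro z hz
  have hk0 : (k:ℝ) ≠ 0 := Nat.cast_ne_zero.mpr (by omega)
  have hkt0 : (kt:ℝ) ≠ 0 := Nat.cast_ne_zero.mpr (by omega)
  set P := phiSq m t k z with hPdef
  have h1t : (0:ℝ) < 1 + t := by linarith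
  have h1tt : (0:ℝ) < 1 + tt := by linarith
  have hP0 : 0 ≤ P := by
    rw [hPdef, phiSq]
    have := @norm_nonneg ℂ _
    positivity
  -- every coordinate squared is ≤ P
  have hzl : ∀ l, ‖z l‖ ^ 2 ≤ P := by
    intro l
    set A := ∑ l, ‖z l‖^2 with hA
    set B := ∑ l, ‖z l‖^(2*k) with hB
    have hAl : ‖z l‖ ^ 2 ≤ A :=
      Finset.single_le_sum (f := fun i => ‖z i‖ ^ 2)
        (fun i _ => by positivity) (Finset.mem_univ l)
    have hBl : ‖z l‖ ^ (2*k) ≤ B :=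
      Finset.single_le_sum (f := fun i => ‖z i‖ ^ (2*k))
        (fun i _ => by positivity) (Finset.mem_univ l)
    have hBl' : ‖z l‖ ^ 2 ≤ B ^ ((1:ℝ)/k) := by
      have h1 : ((‖z l‖ ^ (2*k) : ℝ)) ^ ((1:ℝ)/k) ≤ B ^ ((1:ℝ)/k) :=
        Real.rpow_le_rpow (by positivity) hBl (by positivity)
      have h2 : ((‖z l‖ ^ (2*k) : ℝ)) ^ ((1:ℝ)/k) = ‖z l‖ ^ 2 := by
        rw [pow_mul, ← Real.rpow_natCast (‖z l‖ ^ 2) k,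
          ← Real.rpow_mul (by positivity)]
        rw [mul_one_div, div_self hk0, Real.rpow_one]
      rwa [h2] at h1
    have : (1+t) * (‖z l‖ ^ 2) ≤ (1+t) * P := by
      have hPP : (1+t) * P = A + t * B ^ ((1:ℝ)/k) := by
        rw [hPdef, phiSq]; field_simp; rfl
      rw [hPP]
      nlinarith [mul_le_mul_of_nonneg_left hBl' ht]
    exact le_of_mul_le_mul_left this h1t
  set r := Real.sqrt P with hrdef
  have hr0 : 0 ≤ r := Real.sqrt_nonneg _
  have hr2 : r ^ 2 = P := Real.sq_sqrt hP0
  have hrl : ∀ l, ‖z l‖ ≤ r := by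
    intro l
    rw [← Real.sqrt_sq (norm_nonneg (z l))]
    exact Real.sqrt_le_sqrt (hzl l)
  -- Schwarz-type bound via homogeneity
  have hb : ∀ s : ℝ, 0 < s → s < 1 → (∀ l, ‖z l‖ < s) →
      ∀ j, ‖f z j‖ ≤ s ^ N := by
    intro s hs0 hs1 hs j
    have hsC : (s:ℂ) ≠ 0 := by exact_mod_cast ne_of_gt hs0
    have hw : (s:ℂ)⁻¹ • z ∈ polydisc m := by
      intro l
      have : ‖(s:ℂ)⁻¹ * z l‖ = s⁻¹ * ‖z l‖ := by
        rw [norm_mul, norm_inv, Complex.norm_of_nonneg hs0.le]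
      simp only [Pi.smul_apply, smul_eq_mul, this]
      rw [inv_mul_lt_iff₀ hs0, mul_one]
      exact hs l
    have habs : ‖(s:ℂ)‖ < 1 := by
      rw [Complex.norm_of_nonneg hs0.le]; exact hs1
    have heq := hhom (s:ℂ) habs _ hw
    have hzz : (s:ℂ) • ((s:ℂ)⁻¹ • z) = z := by
      rw [smul_smul, mul_inv_cancel₀ hsC, one_smul]
    rw [hzz] at heq
    have hfw := hmaps _ hw j
    calc ‖f z j‖ = ‖(s:ℂ) ^ N‖ * ‖f ((s:ℂ)⁻¹ • z) j‖ := by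
          rw [heq]; simp [Pi.smul_apply, smul_eq_mul, norm_mul]
      _ ≤ s ^ N * 1 := by
          apply mul_le_mul _ (le_of_lt hfw) (norm_nonneg _) (by positivity)
          rw [norm_pow, Complex.norm_of_nonneg hs0.le]
      _ = s ^ N := mul_one _
  have key : ∀ j, ‖f z j‖ ≤ r ^ N := by
    intro j
    rcases lt_or_ge r 1 with hr1 | hr1
    · have hIoo : ∀ s ∈ Set.Ioo r 1, ‖f z j‖ ≤ s ^ N := by
        intro s hs
        exact hb s (lt_of_le_of_lt hr0 hs.1) hs.2
          (fun l => lt_of_le_of_lt (hrl l) hs.1) j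
      refine ge_of_tendsto (f := fun s : ℝ => s ^ N) (x := nhdsWithin r (Set.Ioi r)) ?_ ?_
      · exact ((continuous_pow N).tendsto r).mono_left nhdsWithin_le_nhds
      · filter_upwards [Ioo_mem_nhdsGT_of_mem ⟨le_refl r, hr1⟩] with s hs using hIoo s hs
    · have h1 : ‖f z j‖ ≤ 1 := le_of_lt (hmaps z hz j)
      exact h1.trans (one_le_pow₀ hr1)
  have key2 : ∀ j, ‖f z j‖ ^ 2 ≤ P ^ N := by
    intro j
    calc ‖f z j‖ ^ 2 ≤ (r ^ N) ^ 2 :=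
          pow_le_pow_left₀ (norm_nonneg _) (key j) 2
      _ = (r ^ 2) ^ N := by ring
      _ = P ^ N := by rw [hr2]
  have key3 : ∀ j, ‖f z j‖ ^ (2*kt) ≤ (P ^ N) ^ kt := by
    intro j
    calc ‖f z j‖ ^ (2*kt) = (‖f z j‖ ^ 2) ^ kt := by
          rw [pow_mul]
      _ ≤ (P ^ N) ^ kt := pow_le_pow_left₀ (by positivity) (key2 j) kt
  have hS1 : ∑ j, ‖f z j‖ ^ 2 ≤ n * P ^ N := by
    calc ∑ j, ‖f z j‖ ^ 2 ≤ ∑ _j : Fin n, P ^ N :=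
          Finset.sum_le_sum (fun j _ => key2 j)
      _ = n * P ^ N := by simp [Finset.sum_const, nsmul_eq_mul]
  have hS2 : (∑ j, ‖f z j‖ ^ (2*kt)) ^ ((1:ℝ)/kt)
      ≤ (n:ℝ) ^ ((1:ℝ)/kt) * P ^ N := by
    have hsum : ∑ j, ‖f z j‖ ^ (2*kt) ≤ (n:ℝ) * (P ^ N) ^ kt := by
      calc ∑ j, ‖f z j‖ ^ (2*kt) ≤ ∑ _j : Fin n, (P ^ N) ^ kt :=
            Finset.sum_le_sum (fun j _ => key3 j)
        _ = (n:ℝ) * (P ^ N) ^ kt := by simp [Finset.sum_const, nsmul_eq_mul]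
    calc (∑ j, ‖f z j‖ ^ (2*kt)) ^ ((1:ℝ)/kt)
        ≤ ((n:ℝ) * (P ^ N) ^ kt) ^ ((1:ℝ)/kt) :=
          Real.rpow_le_rpow (by positivity) hsum (by positivity)
      _ = (n:ℝ) ^ ((1:ℝ)/kt) * ((P ^ N) ^ kt) ^ ((1:ℝ)/kt) :=
          Real.mul_rpow (by positivity) (by positivity)
      _ = (n:ℝ) ^ ((1:ℝ)/kt) * P ^ N := by
          rw [← Real.rpow_natCast (P ^ N) kt, ← Real.rpow_mul (by positivity),
            mul_one_div, div_self hkt0, Real.rpow_one]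
  have hfinal : phiSq n tt kt (f z)
      ≤ (1/(1+tt)) * ((n:ℝ) * P ^ N + tt * ((n:ℝ) ^ ((1:ℝ)/kt) * P ^ N)) := by
    rw [phiSq]
    apply mul_le_mul_of_nonneg_left _ (by positivity)
    exact add_le_add hS1 (mul_le_mul_of_nonneg_left hS2 htt)
  calc phiSq n tt kt (f z)
      ≤ (1/(1+tt)) * ((n:ℝ) * P ^ N + tt * ((n:ℝ) ^ ((1:ℝ)/kt) * P ^ N)) := hfinal
    _ = ((n + tt * (n:ℝ) ^ ((1:ℝ)/kt))/(1+tt)) * P ^ N := by ring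
end

section
/- Let f : P_m → P_n be holomorphic. Then for every z ∈ P_m and v ∈ C^m, F̃_{t̃,k̃}^2(f(z); df(z)v) ≤ ((n + t̃ n^{1/k̃})/(1+t̃)) · F_{t,k}^2(z; v), where F_{t,k}^2(z;v) = (1/(1+t))( Σ_{l=1}^m |v^l|^2/(1-|z^l|^2)^2 + t ( Σ_{l=1}^m |v^l|^{2k}/(1-|z^l|^2)^{2k} )^{1/k} ) and F̃_{t̃,k̃} is defined analogously on P_n. -/
noncomputable def FSq (m : ℕ) (t : ℝ) (k : ℕ) (z v : Fin m → ℂ) : ℝ :=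
  (1/(1+t)) * (∑ l, ‖v l‖^2 / (1 - ‖z l‖^2)^2
    + t * (∑ l, ‖v l‖^(2*k) / (1 - ‖z l‖^2)^(2*k)) ^ ((1:ℝ)/k))


open Metric Set


lemma mobius_abs_lt_one {a b : ℂ} (ha : ‖a‖ < 1) (hb : ‖b‖ < 1) :
    ‖(b - a) / (1 - (starRingEnd ℂ) a * b)‖ < 1 := by
  have key : Complex.normSq (1 - (starRingEnd ℂ) a * b) - Complex.normSq (b - a)
      = (1 - Complex.normSq a) * (1 - Complex.normSq b) := by
    simp [Complex.normSq_apply, Complex.sub_re, Complex.sub_im, Complex.mul_re, Complex.mul_im,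
      Complex.one_re, Complex.one_im, Complex.conj_re, Complex.conj_im]
    ring
  have hna : Complex.normSq a < 1 := by rw [← Complex.sq_norm]; nlinarith [norm_nonneg a]
  have hnb : Complex.normSq b < 1 := by rw [← Complex.sq_norm]; nlinarith [norm_nonneg b]
  have hpos : Complex.normSq (b - a) < Complex.normSq (1 - (starRingEnd ℂ) a * b) := by nlinarith
  have hne : ‖1 - (starRingEnd ℂ) a * b‖ ≠ 0 := by
    intro h
    rw [norm_eq_zero] at h
    rw [h] at hpos
    simp only [map_zero] at hpos
    exact (Complex.normSq_nonneg _).not_gt hpos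
  rw [norm_div, div_lt_one (lt_of_le_of_ne (norm_nonneg _) (Ne.symm hne))]
  rw [Complex.norm_def, Complex.norm_def]
  exact Real.sqrt_lt_sqrt (Complex.normSq_nonneg _) hpos

lemma mobius_den_ne {a c : ℂ} (ha : ‖a‖ < 1) (hc : ‖c‖ < 1) :
    (1 : ℂ) - (starRingEnd ℂ) a * c ≠ 0 := by
  intro h
  have h1 : (starRingEnd ℂ) a * c = 1 := by linear_combination -h
  have h2 := congrArg (norm : ℂ → ℝ) h1
  rw [norm_mul, Complex.norm_conj, norm_one] at h2
  nlinarith [norm_nonneg a, norm_nonneg c]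

lemma spick {g : ℂ → ℂ} (hd : DifferentiableOn ℂ g (ball 0 1))
    (hm : MapsTo g (ball 0 1) (ball 0 1)) {d : ℂ} (hg : HasDerivAt g d 0) :
    ‖d‖ ≤ 1 - ‖g 0‖ ^ 2 := by
  set b := g 0 with hbdef
  have habs : ∀ x ∈ ball (0:ℂ) 1, ‖g x‖ < 1 := by
    intro x hx
    have := hm hx
    rwa [mem_ball_zero_iff] at this
  have hb : ‖b‖ < 1 := habs 0 (mem_ball_self one_pos)
  set h : ℂ → ℂ := fun w => (g w - b) / (1 - (starRingEnd ℂ) b * g w) with hhdef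
  have hden : ∀ x ∈ ball (0:ℂ) 1, (1 : ℂ) - (starRingEnd ℂ) b * g x ≠ 0 :=
    fun x hx => mobius_den_ne hb (habs x hx)
  have hdiff : DifferentiableOn ℂ h (ball 0 1) :=
    (hd.sub_const b).div ((differentiableOn_const 1).sub (hd.const_mul _)) hden
  have hmaps : MapsTo h (ball 0 1) (ball 0 1) := by
    intro x hx
    rw [mem_ball_zero_iff]
    exact mobius_abs_lt_one hb (habs x hx)
  have hzero : h 0 = 0 := by simp [hhdef, ← hbdef]
  have hden0 : (1 : ℂ) - (starRingEnd ℂ) b * b ≠ 0 := mobius_den_ne hb hb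
  have hder : HasDerivAt h (d / (1 - (starRingEnd ℂ) b * b)) 0 := by
    have hnum : HasDerivAt (fun w => g w - b) d 0 := hg.sub_const b
    have hd2 : HasDerivAt (fun w => (1:ℂ) - (starRingEnd ℂ) b * g w)
        (-((starRingEnd ℂ) b * d)) 0 := (hg.const_mul _).const_sub 1
    have := hnum.div hd2 hden0
    refine this.congr_deriv ?_
    rw [← hbdef, div_eq_div_iff (pow_ne_zero 2 hden0) hden0]
    ring
  have hle : ‖deriv h 0‖ ≤ 1 := by
    have hmaps' : MapsTo h (ball 0 1) (ball (h 0) 1) := by rw [hzero]; exact hmaps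
    have := Complex.norm_deriv_le_div_of_mapsTo_ball hdiff (hmaps'.mono_right ball_subset_closedBall) one_pos
    simpa using this
  rw [hder.deriv] at hle
  have habs_den : ‖1 - (starRingEnd ℂ) b * b‖ = 1 - ‖b‖ ^ 2 := by
    have : (1 : ℂ) - (starRingEnd ℂ) b * b = ((1 - Complex.normSq b : ℝ) : ℂ) := by
      rw [← Complex.normSq_eq_conj_mul_self]
      push_cast
      ring
    rw [this, Complex.norm_real, Real.norm_eq_abs, abs_of_nonneg, Complex.sq_norm]
    rw [← Complex.sq_norm]
    nlinarith [norm_nonneg b]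
  rw [norm_div, habs_den, div_le_one (by nlinarith [norm_nonneg b])] at hle
  simpa using hle

lemma mobius_den_ne' {a u : ℂ} (ha : ‖a‖ < 1) (hu : ‖u‖ < 1) :
    (1 : ℂ) + (starRingEnd ℂ) a * u ≠ 0 := by
  have := mobius_den_ne (a := -a) (c := u) (by simpa using ha) hu
  simpa [map_neg, neg_mul, sub_neg_eq_add] using this

lemma mobius_abs_lt_one' {a u : ℂ} (ha : ‖a‖ < 1) (hu : ‖u‖ < 1) :
    ‖(a + u) / (1 + (starRingEnd ℂ) a * u)‖ < 1 := by
  have := mobius_abs_lt_one (a := -a) (b := u) (by simpa using ha) hu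
  rw [sub_neg_eq_add, map_neg, neg_mul, sub_neg_eq_add, add_comm] at this
  exact this

lemma polydisc_isOpen (m : ℕ) : IsOpen (polydisc m) := by
  have : polydisc m = Set.pi Set.univ (fun _ : Fin m => ball (0:ℂ) 1) := by
    ext z; simp [polydisc, mem_ball_zero_iff]
  rw [this]
  exact isOpen_set_pi Set.finite_univ (fun _ _ => isOpen_ball)

lemma component_bound (m n : ℕ) (f : (Fin m → ℂ) → (Fin n → ℂ))
    (hf : DifferentiableOn ℂ f (polydisc m))
    (hmaps : ∀ z ∈ polydisc m, f z ∈ polydisc n)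
    (z : Fin m → ℂ) (hz : z ∈ polydisc m) (v : Fin m → ℂ) (M : ℝ) (hMpos : 0 < M)
    (hM : ∀ l, ‖v l‖ ≤ M * (1 - ‖z l‖ ^ 2)) (j : Fin n) :
    ‖fderiv ℂ f z v j‖ ≤ M * (1 - ‖f z j‖ ^ 2) := by
  have h1z : ∀ l, (0:ℝ) < 1 - ‖z l‖ ^ 2 := by
    intro l; nlinarith [hz l, norm_nonneg (z l)]
  set c : Fin m → ℂ := fun l => v l / ((M * (1 - ‖z l‖ ^ 2) : ℝ) : ℂ) with hcdef
  have hc : ∀ l, ‖c l‖ ≤ 1 := by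
    intro l
    rw [hcdef]
    simp only [norm_div, Complex.norm_real, Real.norm_eq_abs]
    rw [abs_of_pos (mul_pos hMpos (h1z l)), div_le_one (mul_pos hMpos (h1z l))]
    simpa using hM l
  set φ : ℂ → Fin m → ℂ :=
    fun w l => (z l + c l * w) / (1 + (starRingEnd ℂ) (z l) * (c l * w)) with hφdef
  have hcw : ∀ l, ∀ w ∈ ball (0:ℂ) 1, ‖c l * w‖ < 1 := by
    intro l w hw
    rw [mem_ball_zero_iff] at hw
    calc ‖c l * w‖ = ‖c l‖ * ‖w‖ := norm_mul _ _
    _ ≤ 1 * ‖w‖ := by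
        exact mul_le_mul_of_nonneg_right (hc l) (norm_nonneg w)
    _ < 1 := by rwa [one_mul]
  have hφmaps : MapsTo φ (ball 0 1) (polydisc m) := by
    intro w hw l
    exact mobius_abs_lt_one' (hz l) (hcw l w hw)
  have hφdiff : DifferentiableOn ℂ φ (ball 0 1) := by
    rw [differentiableOn_pi]
    intro l
    refine DifferentiableOn.div ?_ ?_ ?_
    · exact (differentiableOn_const _).add ((differentiableOn_id).const_mul _)
    · exact (differentiableOn_const _).add
        (((differentiableOn_id).const_mul _).const_mul _)
    · intro w hw
      exact mobius_den_ne' (hz l) (hcw l w hw)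
  have hφ0 : φ 0 = z := by
    funext l; simp [hφdef]
  set d : Fin m → ℂ := ((M:ℂ))⁻¹ • v with hddef
  have hφder : HasDerivAt φ d 0 := by
    rw [hasDerivAt_pi]
    intro l
    have hnum : HasDerivAt (fun w : ℂ => z l + c l * w) (c l) 0 := by
      simpa using ((hasDerivAt_id (0:ℂ)).const_mul (c l)).const_add (z l)
    have hden : HasDerivAt (fun w : ℂ => (1:ℂ) + (starRingEnd ℂ) (z l) * (c l * w))
        ((starRingEnd ℂ) (z l) * c l) 0 := by
      have : HasDerivAt (fun w : ℂ => ((starRingEnd ℂ) (z l) * c l) * w)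
          ((starRingEnd ℂ) (z l) * c l) 0 := by
        simpa using (hasDerivAt_id (0:ℂ)).const_mul ((starRingEnd ℂ) (z l) * c l)
      have h2 := this.const_add (1:ℂ)
      have e : (fun w : ℂ => (1:ℂ) + (starRingEnd ℂ) (z l) * (c l * w))
          = fun w => 1 + ((starRingEnd ℂ) (z l) * c l) * w := by funext w; ring
      rw [e]; exact h2
    have hq0 : (1:ℂ) + (starRingEnd ℂ) (z l) * (c l * 0) ≠ 0 := by simp
    have hdiv := hnum.div hden hq0
    have hzz : z l * (starRingEnd ℂ) (z l) = ((‖z l‖ ^ 2 : ℝ) : ℂ) := by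
      rw [Complex.mul_conj, Complex.sq_norm]
    refine hdiv.congr_deriv ?_
    symm
    have hMne : ((M:ℝ):ℂ) ≠ 0 := by exact_mod_cast hMpos.ne'
    have h1ne : ((1 - ‖z l‖ ^ 2 : ℝ) : ℂ) ≠ 0 := by
      exact_mod_cast (h1z l).ne'
    simp only [hddef, Pi.smul_apply, smul_eq_mul, hcdef, mul_zero, add_zero, zero_add,
      mul_one, sub_zero]
    rw [one_pow, div_one]
    push_cast at h1ne hzz ⊢
    field_simp [hMne, h1ne]
    linear_combination (v l) * hzz
  have hfz : HasFDerivAt f (fderiv ℂ f z) z :=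
    (hf.differentiableAt ((polydisc_isOpen m).mem_nhds hz)).hasFDerivAt
  have hcomp : HasDerivAt (fun w => f (φ w)) (fderiv ℂ f z d) 0 := by
    refine HasFDerivAt.comp_hasDerivAt 0 ?_ hφder
    rwa [hφ0]
  have hcompj : HasDerivAt (fun w => f (φ w) j) (fderiv ℂ f z d j) 0 :=
    hasDerivAt_pi.mp hcomp j
  have hFdiff : DifferentiableOn ℂ (fun w => f (φ w)) (ball 0 1) :=
    hf.comp hφdiff hφmaps
  have hgdiff : DifferentiableOn ℂ (fun w => f (φ w) j) (ball 0 1) :=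
    differentiableOn_pi.mp hFdiff j
  have hgmaps : MapsTo (fun w => f (φ w) j) (ball 0 1) (ball 0 1) := by
    intro w hw
    rw [mem_ball_zero_iff]
    exact hmaps _ (hφmaps hw) j
  have hsp := spick hgdiff hgmaps hcompj
  rw [hφ0] at hsp
  have hsmul : fderiv ℂ f z d = ((M:ℂ))⁻¹ • fderiv ℂ f z v := by
    rw [hddef, map_smul]
  rw [hsmul] at hsp
  rw [Pi.smul_apply, smul_eq_mul, norm_mul, norm_inv, Complex.norm_real, Real.norm_eq_abs,
    abs_of_pos hMpos, inv_mul_le_iff₀ hMpos] at hsp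
  linarith [hsp]

lemma FSq_zero (m : ℕ) (t : ℝ) (k : ℕ) (hk : k ≠ 0) (z : Fin m → ℂ) :
    FSq m t k z 0 = 0 := by
  have h1 : ((1:ℝ)/k) ≠ 0 := one_div_ne_zero (Nat.cast_ne_zero.2 hk)
  simp [FSq, Real.zero_rpow h1, zero_pow, hk]

lemma term_le {a b M : ℝ} (ha : 0 ≤ a) (hb : 0 < b) (h : a ≤ M * b) (p : ℕ) :
    a ^ p / b ^ p ≤ M ^ p := by
  rw [← div_pow]
  exact pow_le_pow_left₀ (div_nonneg ha hb.le) ((div_le_iff₀ hb).2 (by linarith)) p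

lemma pow_rpow_cancel {M : ℝ} (hM : 0 ≤ M) {k : ℕ} (hk : k ≠ 0) :
    ((M ^ (2 * k) : ℝ)) ^ ((1:ℝ)/k) = M ^ 2 := by
  rw [pow_mul, ← Real.rpow_natCast (M ^ 2) k, ← Real.rpow_mul (by positivity),
    mul_one_div, div_self (by exact_mod_cast hk), Real.rpow_one]


/-- Schwarz lemma for the Kähler-Berwald metrics: for any holomorphic
`f : P_m → P_n`, `F̃²_{t̃,k̃}(f(z); df(z)v) ≤ ((n + t̃ n^{1/k̃})/(1+t̃)) F²_{t,k}(z;v)`. -/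
theorem schwarz_FSq (m n : ℕ) (t tt : ℝ) (ht : 0 ≤ t) (htt : 0 ≤ tt)
    (k kt : ℕ) (hk : 2 ≤ k) (hkt : 2 ≤ kt)
    (f : (Fin m → ℂ) → (Fin n → ℂ))
    (hf : DifferentiableOn ℂ f (polydisc m))
    (hmaps : ∀ z ∈ polydisc m, f z ∈ polydisc n) :
    ∀ z ∈ polydisc m, ∀ v : Fin m → ℂ,
      FSq n tt kt (f z) (fderiv ℂ f z v)
        ≤ ((n + tt * (n:ℝ) ^ ((1:ℝ)/kt))/(1+tt)) * FSq m t k z v := by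
  intro z hz v
  have hkne : k ≠ 0 := by omega
  have hktne : kt ≠ 0 := by omega
  have hcoeff : 0 ≤ (n + tt * (n:ℝ) ^ ((1:ℝ)/kt))/(1+tt) := by positivity
  by_cases hv : v = 0
  · subst hv
    rw [map_zero, FSq_zero n tt kt hktne, FSq_zero m t k hkne, mul_zero]
  · -- setup M
    obtain ⟨l₁, hl₁⟩ := Function.ne_iff.mp hv
    have h1z : ∀ l, (0:ℝ) < 1 - ‖z l‖ ^ 2 := by
      intro l; nlinarith [hz l, norm_nonneg (z l)]
    set r : Fin m → ℝ := fun l => ‖v l‖ / (1 - ‖z l‖ ^ 2) with hrdef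
    obtain ⟨l₀, -, hl₀⟩ := Finset.exists_max_image (Finset.univ : Finset (Fin m)) r
      ⟨l₁, Finset.mem_univ l₁⟩
    set M : ℝ := r l₀ with hMdef
    have hMpos : 0 < M := by
      have : 0 < r l₁ := by
        rw [hrdef]
        have : (0:ℝ) < ‖v l₁‖ := norm_pos_iff.mpr (by simpa using hl₁)
        exact div_pos this (h1z l₁)
      exact lt_of_lt_of_le this (hl₀ l₁ (Finset.mem_univ l₁))
    have hM : ∀ l, ‖v l‖ ≤ M * (1 - ‖z l‖ ^ 2) := by
      intro l
      have := hl₀ l (Finset.mem_univ l)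
      rw [hrdef] at this
      exact (div_le_iff₀ (h1z l)).1 this
    have hfz : ∀ j, (0:ℝ) < 1 - ‖f z j‖ ^ 2 := by
      intro j; have := hmaps z hz j; nlinarith [norm_nonneg (f z j)]
    set u : Fin n → ℂ := fderiv ℂ f z v with hudef
    have hu : ∀ j, ‖u j‖ ≤ M * (1 - ‖f z j‖ ^ 2) :=
      component_bound m n f hf hmaps z hz v M hMpos hM
    -- upper bound for LHS
    have hA' : ∑ j, ‖u j‖^2 / (1 - ‖f z j‖^2)^2 ≤ n * M ^ 2 := by
      calc ∑ j, ‖u j‖^2 / (1 - ‖f z j‖^2)^2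
          ≤ ∑ _j : Fin n, M ^ 2 := Finset.sum_le_sum fun j _ =>
            term_le (norm_nonneg _) (hfz j) (hu j) 2
      _ = n * M ^ 2 := by simp [mul_comm]
    have hB' : ∑ j, ‖u j‖^(2*kt) / (1 - ‖f z j‖^2)^(2*kt)
        ≤ n * M ^ (2*kt) := by
      calc ∑ j, ‖u j‖^(2*kt) / (1 - ‖f z j‖^2)^(2*kt)
          ≤ ∑ _j : Fin n, M ^ (2*kt) := Finset.sum_le_sum fun j _ =>
            term_le (norm_nonneg _) (hfz j) (hu j) (2*kt)
      _ = n * M ^ (2*kt) := by simp [mul_comm]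
    have hB'0 : (0:ℝ) ≤ ∑ j, ‖u j‖^(2*kt) / (1 - ‖f z j‖^2)^(2*kt) := by
      exact Finset.sum_nonneg fun j _ =>
        div_nonneg (pow_nonneg (norm_nonneg _) _) (pow_nonneg (hfz j).le _)
    have hBr : (∑ j, ‖u j‖^(2*kt) / (1 - ‖f z j‖^2)^(2*kt)) ^ ((1:ℝ)/kt)
        ≤ (n:ℝ) ^ ((1:ℝ)/kt) * M ^ 2 := by
      calc (∑ j, ‖u j‖^(2*kt) / (1 - ‖f z j‖^2)^(2*kt)) ^ ((1:ℝ)/kt)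
          ≤ ((n:ℝ) * M ^ (2*kt)) ^ ((1:ℝ)/kt) :=
            Real.rpow_le_rpow hB'0 hB' (by positivity)
      _ = (n:ℝ) ^ ((1:ℝ)/kt) * M ^ 2 := by
          rw [Real.mul_rpow (Nat.cast_nonneg n) (pow_nonneg hMpos.le _),
            pow_rpow_cancel hMpos.le hktne]
    have hLHS : FSq n tt kt (f z) u ≤ ((n + tt * (n:ℝ) ^ ((1:ℝ)/kt))/(1+tt)) * M ^ 2 := by
      rw [FSq]
      have h1tt : (0:ℝ) < 1 + tt := by linarith
      have hsum : (∑ j, ‖u j‖^2 / (1 - ‖f z j‖^2)^2)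
          + tt * (∑ j, ‖u j‖^(2*kt) / (1 - ‖f z j‖^2)^(2*kt))
            ^ ((1:ℝ)/kt)
          ≤ (n + tt * (n:ℝ) ^ ((1:ℝ)/kt)) * M ^ 2 := by
        calc _ ≤ (n:ℝ) * M ^ 2 + tt * ((n:ℝ) ^ ((1:ℝ)/kt) * M ^ 2) :=
              add_le_add hA' (mul_le_mul_of_nonneg_left hBr htt)
        _ = (n + tt * (n:ℝ) ^ ((1:ℝ)/kt)) * M ^ 2 := by ring
      calc (1/(1+tt)) * ((∑ j, ‖u j‖^2 / (1 - ‖f z j‖^2)^2)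
          + tt * (∑ j, ‖u j‖^(2*kt) / (1 - ‖f z j‖^2)^(2*kt))
            ^ ((1:ℝ)/kt))
          ≤ (1/(1+tt)) * ((n + tt * (n:ℝ) ^ ((1:ℝ)/kt)) * M ^ 2) :=
            mul_le_mul_of_nonneg_left hsum (by positivity)
      _ = ((n + tt * (n:ℝ) ^ ((1:ℝ)/kt))/(1+tt)) * M ^ 2 := by ring
    -- lower bound for RHS
    have hterm0 : ‖v l₀‖^2 / (1 - ‖z l₀‖^2)^2 = M ^ 2 := by
      rw [hMdef, hrdef, div_pow]
    have htermk : ‖v l₀‖^(2*k) / (1 - ‖z l₀‖^2)^(2*k) = M ^ (2*k) := by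
      rw [hMdef, hrdef, div_pow]
    have hA : M ^ 2 ≤ ∑ l, ‖v l‖^2 / (1 - ‖z l‖^2)^2 := by
      rw [← hterm0]
      exact Finset.single_le_sum
        (f := fun l => ‖v l‖^2 / (1 - ‖z l‖^2)^2)
        (fun l _ => by positivity) (Finset.mem_univ l₀)
    have hB : M ^ (2*k) ≤ ∑ l, ‖v l‖^(2*k) / (1 - ‖z l‖^2)^(2*k) := by
      rw [← htermk]
      exact Finset.single_le_sum
        (f := fun l => ‖v l‖^(2*k) / (1 - ‖z l‖^2)^(2*k))
        (fun l _ => div_nonneg (pow_nonneg (norm_nonneg _) _)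
          (pow_nonneg (h1z l).le _)) (Finset.mem_univ l₀)
    have hBrlow : M ^ 2 ≤ (∑ l, ‖v l‖^(2*k) / (1 - ‖z l‖^2)^(2*k))
        ^ ((1:ℝ)/k) := by
      calc M ^ 2 = (M ^ (2*k)) ^ ((1:ℝ)/k) := (pow_rpow_cancel hMpos.le hkne).symm
      _ ≤ _ := Real.rpow_le_rpow (by positivity) hB (by positivity)
    have hRHS : M ^ 2 ≤ FSq m t k z v := by
      rw [FSq]
      have h1t : (0:ℝ) < 1 + t := by linarith
      rw [div_mul_eq_mul_div, one_mul, le_div_iff₀ h1t]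
      have := mul_le_mul_of_nonneg_left hBrlow ht
      nlinarith
    calc FSq n tt kt (f z) u ≤ ((n + tt * (n:ℝ) ^ ((1:ℝ)/kt))/(1+tt)) * M ^ 2 := hLHS
    _ ≤ _ := mul_le_mul_of_nonneg_left hRHS hcoeff
end

section
/- For every z in the open unit polydisc P_m, p(z)^2/(1-p(z)^2)^2 ≤ F_{t,k}^2(z; z) ≤ ((m + t m^{1/k})/(1+t)) · p(z)^2/(1-p(z)^2)^2, where p(z) = max_l |z^l| and F_{t,k}^2(z;v) = (1/(1+t))( Σ_l |v^l|^2/(1-|z^l|^2)^2 + t (Σ_l |v^l|^{2k}/(1-|z^l|^2)^{2k})^{1/k} ). -/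
set_option maxHeartbeats 1000000

lemma aux_mono {a b : ℝ} (ha : 0 ≤ a) (hab : a ≤ b) (hb : b < 1) :
    a/(1-a^2) ≤ b/(1-b^2) := by
  have h1 : 0 < 1 - b^2 := by nlinarith
  have h2 : 0 < 1 - a^2 := by nlinarith
  rw [div_le_div_iff₀ h2 h1]
  nlinarith [mul_nonneg (mul_nonneg ha (ha.trans hab)) (sub_nonneg.2 hab)]

/-- `p(z)²/(1-p(z)²)² ≤ F²_{t,k}(z;z) ≤ ((m + t m^{1/k})/(1+t)) · p(z)²/(1-p(z)²)²`. -/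
theorem FSq_radial_bounds (m : ℕ) [NeZero m] (t : ℝ) (ht : 0 ≤ t) (k : ℕ) (hk : 2 ≤ k) :
    ∀ z ∈ polydisc m,
      (Finset.univ.sup' Finset.univ_nonempty (fun l => ‖z l‖))^2 /
          (1 - (Finset.univ.sup' Finset.univ_nonempty (fun l => ‖z l‖))^2)^2
        ≤ FSq m t k z z ∧
      FSq m t k z z
        ≤ ((m + t * (m:ℝ) ^ ((1:ℝ)/k))/(1+t)) *
          ((Finset.univ.sup' Finset.univ_nonempty (fun l => ‖z l‖))^2 /
            (1 - (Finset.univ.sup' Finset.univ_nonempty (fun l => ‖z l‖))^2)^2) := by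
  intro z hz
  set p : ℝ := Finset.univ.sup' Finset.univ_nonempty (fun l => ‖z l‖) with hp
  obtain ⟨l0, _, hl0⟩ := Finset.exists_mem_eq_sup' (Finset.univ_nonempty)
    (fun l : Fin m => ‖z l‖)
  have hple : ∀ l, ‖z l‖ ≤ p := fun l =>
    Finset.le_sup' (fun l => ‖z l‖) (Finset.mem_univ l)
  have hp0 : 0 ≤ p := (norm_nonneg _).trans (hple l0)
  have hp1 : p < 1 := by rw [hp, Finset.sup'_lt_iff]; exact fun l _ => hz l
  have hden : 0 < 1 - p^2 := by nlinarith
  set P : ℝ := p^2/(1-p^2)^2 with hPdef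
  have hP0 : 0 ≤ P := by positivity
  have hPform : P = (p/(1-p^2))^2 := by rw [div_pow]
  have hdl : ∀ l, 0 < 1 - ‖z l‖^2 := fun l => by
    have h1 := hz l; have h2 := norm_nonneg (z l); nlinarith
  have hterm : ∀ l, ‖z l‖^2 / (1 - ‖z l‖^2)^2
      = (‖z l‖/(1 - ‖z l‖^2))^2 := fun l => by rw [div_pow]
  have htermk : ∀ l, ‖z l‖^(2*k) / (1 - ‖z l‖^2)^(2*k)
      = ((‖z l‖/(1 - ‖z l‖^2))^2)^k := fun l => by
    rw [← pow_mul, ← div_pow, mul_comm 2 k, pow_mul]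
  have hmono : ∀ l, ‖z l‖/(1 - ‖z l‖^2) ≤ p/(1-p^2) :=
    fun l => aux_mono (norm_nonneg _) (hple l) hp1
  have hmono2 : ∀ l, (‖z l‖/(1 - ‖z l‖^2))^2 ≤ P := by
    intro l
    rw [hPform]
    exact pow_le_pow_left₀ (div_nonneg (norm_nonneg _) (hdl l).le) (hmono l) 2
  have hnn : ∀ l, (0:ℝ) ≤ (‖z l‖/(1 - ‖z l‖^2))^2 :=
    fun l => by positivity
  -- sums
  set S1 : ℝ := ∑ l, ‖z l‖^2 / (1 - ‖z l‖^2)^2 with hS1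
  set S2 : ℝ := ∑ l, ‖z l‖^(2*k) / (1 - ‖z l‖^2)^(2*k) with hS2
  have hterml0 : ‖z l0‖/(1 - ‖z l0‖^2) = p/(1-p^2) := by
    rw [hp, hl0]
  have hS1lb : P ≤ S1 := by
    rw [hS1]
    have := Finset.single_le_sum (f := fun l =>
      ‖z l‖^2 / (1 - ‖z l‖^2)^2)
      (fun l _ => by positivity) (Finset.mem_univ l0)
    calc P = ‖z l0‖^2 / (1 - ‖z l0‖^2)^2 := by
              rw [hterm l0, hterml0, hPform]
      _ ≤ _ := this
  have hS1ub : S1 ≤ m * P := by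
    rw [hS1]
    calc ∑ l, ‖z l‖^2 / (1 - ‖z l‖^2)^2
        ≤ ∑ _l : Fin m, P := Finset.sum_le_sum (fun l _ => by rw [hterm]; exact hmono2 l)
      _ = m * P := by rw [Finset.sum_const, Finset.card_univ, Fintype.card_fin, nsmul_eq_mul]
  have hS2lb : P^k ≤ S2 := by
    rw [hS2]
    have := Finset.single_le_sum (f := fun l =>
      ‖z l‖^(2*k) / (1 - ‖z l‖^2)^(2*k))
      (fun l _ => div_nonneg (pow_nonneg (norm_nonneg _) _)
        (pow_nonneg (hdl l).le _)) (Finset.mem_univ l0)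
    calc P^k = ‖z l0‖^(2*k) / (1 - ‖z l0‖^2)^(2*k) := by
              rw [htermk l0, hterml0, hPform]
      _ ≤ _ := this
  have hS2ub : S2 ≤ m * P^k := by
    rw [hS2]
    calc ∑ l, ‖z l‖^(2*k) / (1 - ‖z l‖^2)^(2*k)
        ≤ ∑ _l : Fin m, P^k := Finset.sum_le_sum (fun l _ => by
            rw [htermk]
            exact pow_le_pow_left₀ (hnn l) (hmono2 l) k)
      _ = m * P^k := by rw [Finset.sum_const, Finset.card_univ, Fintype.card_fin, nsmul_eq_mul]
  have hk0 : (0:ℝ) < k := by positivity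
  have hS2nn : 0 ≤ S2 := le_trans (by positivity) hS2lb
  have hPk : (P^k) ^ ((1:ℝ)/k) = P := by
    rw [← Real.rpow_natCast P k, ← Real.rpow_mul hP0, mul_one_div,
      div_self (ne_of_gt hk0), Real.rpow_one]
  have hrlb : P ≤ S2 ^ ((1:ℝ)/k) := by
    rw [← hPk]
    exact Real.rpow_le_rpow (by positivity) hS2lb (one_div_nonneg.mpr hk0.le)
  have hrub : S2 ^ ((1:ℝ)/k) ≤ (m:ℝ) ^ ((1:ℝ)/k) * P := by
    calc S2 ^ ((1:ℝ)/k) ≤ ((m:ℝ) * P^k) ^ ((1:ℝ)/k) :=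
          Real.rpow_le_rpow hS2nn hS2ub (one_div_nonneg.mpr hk0.le)
      _ = (m:ℝ) ^ ((1:ℝ)/k) * P := by
          rw [Real.mul_rpow (by positivity) (by positivity), hPk]
  have ht1 : (0:ℝ) < 1 + t := by linarith
  have hF : FSq m t k z z = (1/(1+t)) * (S1 + t * S2 ^ ((1:ℝ)/k)) := rfl
  constructor
  · rw [hF]
    have : P * (1+t) ≤ S1 + t * S2 ^ ((1:ℝ)/k) := by
      have := mul_le_mul_of_nonneg_left hrlb ht
      nlinarith
    calc P = (1/(1+t)) * (P * (1+t)) := by field_simp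
      _ ≤ _ := by
        apply mul_le_mul_of_nonneg_left this (by positivity)
  · rw [hF]
    have h2 : S1 + t * S2 ^ ((1:ℝ)/k) ≤ (m + t * (m:ℝ) ^ ((1:ℝ)/k)) * P := by
      have := mul_le_mul_of_nonneg_left hrub ht
      nlinarith
    calc (1/(1+t)) * (S1 + t * S2 ^ ((1:ℝ)/k))
        ≤ (1/(1+t)) * ((m + t * (m:ℝ) ^ ((1:ℝ)/k)) * P) :=
          mul_le_mul_of_nonneg_left h2 (by positivity)
      _ = ((m + t * (m:ℝ) ^ ((1:ℝ)/k))/(1+t)) * P := by ring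
end
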